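/- arXiv:1903.07870 — 4 statements merged into one kernel-verified Lean document; each statement's English description precedes it below -/
import Mathlib

section
/- Let X be a real-valued mean-zero random variable and p > q ≥ 1. Suppose C_p := sup over events A of P(A) · |E[X | A]|^p is finite. Then E[|X|^q] ≤ (2 C_p)^(q/p) · p/(p−q). -/
open MeasureTheory Set

private lemma tail_aux {Ω : Type*} [MeasurableSpace Ω] (μ : Measure Ω) [IsProbabilityMeasure μ]
    (X Y : Ω → ℝ) (p Cp : ℝ) (hp : 0 < p)
    (hX : Integrable X μ) (hXY : X =ᵐ[μ] Y) (hYm : Measurable Y)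
    (hCp : ∀ A : Set Ω, MeasurableSet A → 0 < (μ A).toReal →
      (μ A).toReal * |(∫ ω in A, X ω ∂μ) / (μ A).toReal| ^ p ≤ Cp)
    {t : ℝ} (ht : 0 < t) :
    μ {ω | t < |Y ω|} ≤ ENNReal.ofReal (2 * Cp / t ^ p) := by
  have hY : Integrable Y μ := hX.congr hXY
  have htp : (0:ℝ) < t ^ p := Real.rpow_pos_of_pos ht p
  have hCp0 : 0 ≤ Cp := by
    have h := hCp univ MeasurableSet.univ (by simp)
    refine le_trans ?_ h
    positivity
  have hside : ∀ A : Set Ω, MeasurableSet A →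
      t * (μ A).toReal ≤ |∫ ω in A, Y ω ∂μ| → μ A ≤ ENNReal.ofReal (Cp / t ^ p) := by
    intro A hA habs
    rcases eq_or_ne (μ A) 0 with h0 | h0
    · simp [h0]
    have hm : 0 < (μ A).toReal := ENNReal.toReal_pos h0 (measure_ne_top μ A)
    set m := (μ A).toReal with hmdef
    have hXA : ∫ ω in A, X ω ∂μ = ∫ ω in A, Y ω ∂μ :=
      integral_congr_ae (ae_restrict_of_ae hXY)
    have h1 : t ≤ |(∫ ω in A, X ω ∂μ) / m| := by
      rw [hXA, abs_div, abs_of_pos hm, le_div_iff₀ hm]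
      exact habs
    have h2 : m * t ^ p ≤ m * |(∫ ω in A, X ω ∂μ) / m| ^ p :=
      mul_le_mul_of_nonneg_left (Real.rpow_le_rpow ht.le h1 hp.le) hm.le
    have h3 : m * t ^ p ≤ Cp := h2.trans (hCp A hA hm)
    have h4 : m ≤ Cp / t ^ p := (le_div_iff₀ htp).2 (by linarith [h3])
    calc μ A = ENNReal.ofReal m := (ENNReal.ofReal_toReal (measure_ne_top μ A)).symm
    _ ≤ ENNReal.ofReal (Cp / t ^ p) := ENNReal.ofReal_le_ofReal h4
  have hA : MeasurableSet {ω | t < Y ω} := measurableSet_lt measurable_const hYm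
  have hB : MeasurableSet {ω | Y ω < -t} := measurableSet_lt hYm measurable_const
  have bndA : μ {ω | t < Y ω} ≤ ENNReal.ofReal (Cp / t ^ p) := by
    apply hside _ hA
    have hge : t * (μ {ω | t < Y ω}).toReal ≤ ∫ ω in {ω | t < Y ω}, Y ω ∂μ :=
      setIntegral_ge_of_const_le_real hA (measure_ne_top μ _)
        (fun x hx => le_of_lt hx) hY.integrableOn
    exact hge.trans (le_abs_self _)
  have bndB : μ {ω | Y ω < -t} ≤ ENNReal.ofReal (Cp / t ^ p) := by
    apply hside _ hB
    have hge : t * (μ {ω | Y ω < -t}).toReal ≤ ∫ ω in {ω | Y ω < -t}, -Y ω ∂μ :=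
      setIntegral_ge_of_const_le_real hB (measure_ne_top μ _)
        (fun x hx => by simp only [mem_setOf_eq] at hx; linarith) hY.integrableOn.neg
    rw [integral_neg] at hge
    exact hge.trans (neg_le_abs _)
  have hsub : {ω | t < |Y ω|} ⊆ {ω | t < Y ω} ∪ {ω | Y ω < -t} := by
    intro x hx
    simp only [mem_setOf_eq] at hx
    rcases lt_abs.1 hx with h | h
    · exact Or.inl h
    · exact Or.inr (by simpa [mem_setOf_eq] using by linarith)
  calc μ {ω | t < |Y ω|} ≤ μ ({ω | t < Y ω} ∪ {ω | Y ω < -t}) := measure_mono hsub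
  _ ≤ μ {ω | t < Y ω} + μ {ω | Y ω < -t} := measure_union_le _ _
  _ ≤ ENNReal.ofReal (Cp / t ^ p) + ENNReal.ofReal (Cp / t ^ p) := add_le_add bndA bndB
  _ = ENNReal.ofReal (2 * Cp / t ^ p) := by
      rw [← ENNReal.ofReal_add (by positivity) (by positivity)]
      ring_nf

private lemma layer_aux {Ω : Type*} [MeasurableSpace Ω] (μ : Measure Ω) [IsProbabilityMeasure μ]
    (Y : Ω → ℝ) (hYm : Measurable Y) (q : ℝ) (hq : 1 ≤ q) :
    ∫⁻ ω, ENNReal.ofReal (|Y ω| ^ q) ∂μ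
      = ∫⁻ t in Ioi 0, μ {a | t < |Y a|} * ENNReal.ofReal (q * t ^ (q - 1)) := by
  have hq0 : (0:ℝ) < q := lt_of_lt_of_le one_pos hq
  have key := lintegral_comp_eq_lintegral_meas_lt_mul μ (f := fun ω => |Y ω|)
    (g := fun t => q * t ^ (q - 1))
    (Filter.Eventually.of_forall (fun ω => abs_nonneg _))
    (hYm.abs.aemeasurable)
    (fun t ht => (intervalIntegral.intervalIntegrable_rpow' (by linarith)).const_mul q)
    ?_
  · rw [← key]
    apply lintegral_congr_ae
    refine Filter.Eventually.of_forall (fun ω => ?_)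
    simp only []
    rw [intervalIntegral.integral_const_mul, integral_rpow (Or.inl (by linarith))]
    rw [sub_add_cancel, Real.zero_rpow hq0.ne']
    field_simp
    simp only [sub_zero]
  · refine (ae_restrict_iff' measurableSet_Ioi).mpr
      (Filter.Eventually.of_forall (fun t ht => ?_))
    have : (0:ℝ) < t := ht
    positivity

private lemma calcC (q T : ℝ) (hq : 1 ≤ q) (hT : 0 < T) :
    ∫⁻ t in Ioc 0 T, ENNReal.ofReal (q * t ^ (q - 1)) = ENNReal.ofReal (T ^ q) := by
  have hq0 : (0:ℝ) < q := lt_of_lt_of_le one_pos hq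
  have hint : IntegrableOn (fun t : ℝ => q * t ^ (q - 1)) (Ioc 0 T) volume :=
    (intervalIntegrable_iff_integrableOn_Ioc_of_le hT.le).mp
      ((intervalIntegral.intervalIntegrable_rpow' (by linarith)).const_mul q)
  rw [← ofReal_integral_eq_lintegral_ofReal hint ?nn]
  case nn =>
    refine (ae_restrict_iff' measurableSet_Ioc).mpr
      (Filter.Eventually.of_forall (fun t ht => ?_))
    have : (0:ℝ) < t := ht.1
    positivity
  congr 1
  rw [← intervalIntegral.integral_of_le hT.le,
    intervalIntegral.integral_const_mul, integral_rpow (Or.inl (by linarith))]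
  rw [sub_add_cancel, Real.zero_rpow hq0.ne']
  field_simp
  simp only [sub_zero]

private lemma calcD (c r T : ℝ) (hc : 0 ≤ c) (hr : r < -1) (hT : 0 < T) :
    ∫⁻ t in Ioi T, ENNReal.ofReal (c * t ^ r) = ENNReal.ofReal (c * (-T ^ (r + 1) / (r + 1))) := by
  have hint : IntegrableOn (fun t : ℝ => c * t ^ r) (Ioi T) volume :=
    (integrableOn_Ioi_rpow_of_lt hr hT).const_mul c
  rw [← ofReal_integral_eq_lintegral_ofReal hint ?nn]
  case nn =>
    refine (ae_restrict_iff' measurableSet_Ioi).mpr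
      (Filter.Eventually.of_forall (fun t ht => ?_))
    have h1 : (0:ℝ) < t := hT.trans ht
    positivity
  congr 1
  rw [integral_const_mul, integral_Ioi_rpow_of_lt hr hT]

theorem stmt1 {Ω : Type*} [MeasurableSpace Ω] (μ : Measure Ω) [IsProbabilityMeasure μ]
    (X : Ω → ℝ) (p q Cp : ℝ) (hq : 1 ≤ q) (hpq : q < p)
    (hX : Integrable X μ) (hmean : ∫ ω, X ω ∂μ = 0)
    (hCp : ∀ A : Set Ω, MeasurableSet A → 0 < (μ A).toReal →
      (μ A).toReal * |(∫ ω in A, X ω ∂μ) / (μ A).toReal| ^ p ≤ Cp) :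
    ∫ ω, |X ω| ^ q ∂μ ≤ (2 * Cp) ^ (q / p) * (p / (p - q)) := by
  have hq0 : (0:ℝ) < q := lt_of_lt_of_le one_pos hq
  have hp0 : (0:ℝ) < p := hq0.trans hpq
  have hpq' : (0:ℝ) < p - q := by linarith
  obtain ⟨Y, hYsm, hXY⟩ := hX.aestronglyMeasurable
  have hYm : Measurable Y := hYsm.measurable
  have hCp0 : 0 ≤ Cp := by
    have h := hCp univ MeasurableSet.univ (by simp)
    refine le_trans ?_ h
    positivity
  have tail : ∀ t : ℝ, 0 < t → μ {ω | t < |Y ω|} ≤ ENNReal.ofReal (2 * Cp / t ^ p) :=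
    fun t ht => tail_aux μ X Y p Cp hp0 hX hXY hYm hCp ht
  have hnn : 0 ≤ᵐ[μ] fun ω => |X ω| ^ q :=
    Filter.Eventually.of_forall fun ω => by positivity
  have hcont : Continuous fun x : ℝ => |x| ^ q := by
    rw [continuous_iff_continuousAt]
    intro x
    exact (Real.continuousAt_rpow_const _ _ (Or.inr hq0.le)).comp continuous_abs.continuousAt
  have hmeas : AEStronglyMeasurable (fun ω => |X ω| ^ q) μ :=
    hcont.comp_aestronglyMeasurable hX.aestronglyMeasurable
  have hlcongr : ∫⁻ ω, ENNReal.ofReal (|X ω| ^ q) ∂μ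
      = ∫⁻ ω, ENNReal.ofReal (|Y ω| ^ q) ∂μ :=
    lintegral_congr_ae (hXY.mono fun ω h => by dsimp only; rw [h])
  rcases eq_or_lt_of_le hCp0 with hCpz | hCpp
  · -- Cp = 0 : X = 0 a.e.
    have hnullt : ∀ t : ℝ, 0 < t → μ {ω | t < |Y ω|} = 0 := by
      intro t ht
      have := tail t ht
      simpa [← hCpz] using this
    have hnull : μ {ω | 0 < |Y ω|} = 0 := by
      have hcover : {ω | 0 < |Y ω|} ⊆ ⋃ n : ℕ, {ω | (1:ℝ)/(n+1) < |Y ω|} := by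
        intro x hx
        simp only [mem_setOf_eq] at hx
        obtain ⟨n, hn⟩ := exists_nat_one_div_lt hx
        exact mem_iUnion.2 ⟨n, hn⟩
      refine measure_mono_null hcover (measure_iUnion_null fun n => hnullt _ (by positivity))
    have hY0 : Y =ᵐ[μ] 0 := by
      rw [Filter.EventuallyEq, ae_iff]
      refine measure_mono_null ?_ hnull
      intro x hx
      simp only [mem_setOf_eq, Pi.zero_apply] at hx ⊢
      exact abs_pos.2 hx
    have hX0 : X =ᵐ[μ] 0 := hXY.trans hY0
    have hz : (fun ω => |X ω| ^ q) =ᵐ[μ] (fun _ => (0:ℝ)) := by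
      filter_upwards [hX0] with ω h
      simp only [Pi.zero_apply] at h
      rw [h]
      simp [Real.zero_rpow hq0.ne']
    have hint0 : ∫ ω, |X ω| ^ q ∂μ = 0 := by
      rw [integral_congr_ae hz, integral_const, smul_zero]
    rw [hint0, ← hCpz, mul_zero, Real.zero_rpow (div_ne_zero hq0.ne' hp0.ne'), zero_mul]
  · -- main case : Cp > 0
    have h2Cp : (0:ℝ) < 2 * Cp := by linarith
    set T : ℝ := (2 * Cp) ^ (1 / p) with hTdef
    have hT : 0 < T := Real.rpow_pos_of_pos h2Cp _
    have hTq : T ^ q = (2 * Cp) ^ (q / p) := by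
      rw [hTdef, ← Real.rpow_mul h2Cp.le]
      congr 1
      field_simp
    have hTp : T ^ p = 2 * Cp := by
      rw [hTdef, ← Real.rpow_mul h2Cp.le, one_div, inv_mul_cancel₀ hp0.ne', Real.rpow_one]
    have hmain : ∫⁻ ω, ENNReal.ofReal (|Y ω| ^ q) ∂μ
        ≤ ENNReal.ofReal ((2 * Cp) ^ (q / p) * (p / (p - q))) := by
      rw [layer_aux μ Y hYm q hq]
      rw [← Ioc_union_Ioi_eq_Ioi hT.le,
        lintegral_union measurableSet_Ioi (Ioc_disjoint_Ioi le_rfl)]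
      have h1 : ∫⁻ t in Ioc 0 T, μ {a | t < |Y a|} * ENNReal.ofReal (q * t ^ (q - 1))
          ≤ ENNReal.ofReal (T ^ q) := by
        calc ∫⁻ t in Ioc 0 T, μ {a | t < |Y a|} * ENNReal.ofReal (q * t ^ (q - 1))
            ≤ ∫⁻ t in Ioc 0 T, 1 * ENNReal.ofReal (q * t ^ (q - 1)) :=
              lintegral_mono (fun t => mul_le_mul_left prob_le_one _)
          _ = ENNReal.ofReal (T ^ q) := by
              simp only [one_mul]
              exact calcC q T hq hT
      have h2 : ∫⁻ t in Ioi T, μ {a | t < |Y a|} * ENNReal.ofReal (q * t ^ (q - 1))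
          ≤ ENNReal.ofReal (2 * Cp * q * (T ^ (q - p) / (p - q))) := by
        have hple : ∀ t ∈ Ioi T, μ {a | t < |Y a|} * ENNReal.ofReal (q * t ^ (q - 1))
            ≤ ENNReal.ofReal ((2 * Cp * q) * t ^ (q - 1 - p)) := by
          intro t ht
          have ht0 : 0 < t := hT.trans ht
          calc μ {a | t < |Y a|} * ENNReal.ofReal (q * t ^ (q - 1))
              ≤ ENNReal.ofReal (2 * Cp / t ^ p) * ENNReal.ofReal (q * t ^ (q - 1)) :=
                mul_le_mul_left (tail t ht0) _
            _ = ENNReal.ofReal ((2 * Cp / t ^ p) * (q * t ^ (q - 1))) :=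
                (ENNReal.ofReal_mul (by positivity)).symm
            _ = ENNReal.ofReal ((2 * Cp * q) * t ^ (q - 1 - p)) := by
                congr 1
                rw [Real.rpow_sub ht0 (q - 1) p]
                ring
        calc ∫⁻ t in Ioi T, μ {a | t < |Y a|} * ENNReal.ofReal (q * t ^ (q - 1))
            ≤ ∫⁻ t in Ioi T, ENNReal.ofReal ((2 * Cp * q) * t ^ (q - 1 - p)) :=
              setLIntegral_mono' measurableSet_Ioi hple
          _ = ENNReal.ofReal ((2 * Cp * q) * (-T ^ (q - 1 - p + 1) / (q - 1 - p + 1))) :=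
              calcD _ _ _ (by positivity) (by linarith) hT
          _ = ENNReal.ofReal (2 * Cp * q * (T ^ (q - p) / (p - q))) := by
              congr 1
              rw [show q - 1 - p + 1 = q - p by ring, neg_div,
                show (q - p : ℝ) = -(p - q) by ring, div_neg, neg_neg]
      have hTqp0 : 0 ≤ T ^ (q - p) := Real.rpow_nonneg hT.le _
      calc (∫⁻ t in Ioc 0 T, μ {a | t < |Y a|} * ENNReal.ofReal (q * t ^ (q - 1)))
            + ∫⁻ t in Ioi T, μ {a | t < |Y a|} * ENNReal.ofReal (q * t ^ (q - 1))
          ≤ ENNReal.ofReal (T ^ q) + ENNReal.ofReal (2 * Cp * q * (T ^ (q - p) / (p - q))) :=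
            add_le_add h1 h2
        _ = ENNReal.ofReal (T ^ q + 2 * Cp * q * (T ^ (q - p) / (p - q))) :=
            (ENNReal.ofReal_add (Real.rpow_nonneg hT.le _) (by positivity)).symm
        _ = ENNReal.ofReal ((2 * Cp) ^ (q / p) * (p / (p - q))) := by
            congr 1
            rw [Real.rpow_sub hT, hTp, hTq]
            field_simp
            ring
    rw [integral_eq_lintegral_of_nonneg_ae hnn hmeas]
    have hle : ∫⁻ ω, ENNReal.ofReal (|X ω| ^ q) ∂μ
        ≤ ENNReal.ofReal ((2 * Cp) ^ (q / p) * (p / (p - q))) := by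
      rw [hlcongr]; exact hmain
    have hRHS0 : 0 ≤ (2 * Cp) ^ (q / p) * (p / (p - q)) :=
      mul_nonneg (Real.rpow_nonneg h2Cp.le _) (div_nonneg hp0.le hpq'.le)
    exact le_trans (ENNReal.toReal_mono ENNReal.ofReal_ne_top hle)
      (le_of_eq (ENNReal.toReal_ofReal hRHS0))
end

section
/- Let X be a mean-zero real random variable, p > 0, and suppose that for every event A with P(A) > 0 one has P(A) · |E[X | A]|^p ≤ C. Then for every t > 0, P(|X| ≥ t) ≤ 2C / t^p. -/
open MeasureTheory

theorem stmt2 {Ω : Type*} [MeasurableSpace Ω] (μ : Measure Ω) [IsProbabilityMeasure μ]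
    (X : Ω → ℝ) (p C : ℝ) (hp : 0 < p) (hC : 0 < C)
    (hX : Integrable X μ) (hmean : ∫ ω, X ω ∂μ = 0)
    (hdev : ∀ A : Set Ω, MeasurableSet A → 0 < (μ A).toReal →
      (μ A).toReal * |(∫ ω in A, X ω ∂μ) / (μ A).toReal| ^ p ≤ C) :
    ∀ t : ℝ, 0 < t → (μ {ω | t ≤ |X ω|}).toReal ≤ 2 * C / t ^ p := by
  intro t ht
  obtain ⟨Y, hYm, hXY⟩ : ∃ Y, StronglyMeasurable Y ∧ X =ᵐ[μ] Y :=
    ⟨hX.1.mk X, hX.1.stronglyMeasurable_mk, hX.1.ae_eq_mk⟩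
  have hYmeas : Measurable Y := hYm.measurable
  have hYint : Integrable Y μ := hX.congr hXY
  have htp : 0 < t ^ p := Real.rpow_pos_of_pos ht p
  -- key lemma
  have key : ∀ A : Set Ω, MeasurableSet A → t * (μ A).toReal ≤ |∫ ω in A, X ω ∂μ| →
      (μ A).toReal ≤ C / t ^ p := by
    intro A hA hint
    rcases eq_or_lt_of_le (ENNReal.toReal_nonneg : 0 ≤ (μ A).toReal) with h0 | h0
    · rw [← h0]; positivity
    · have h1 := hdev A hA h0
      have havg : t ≤ |(∫ ω in A, X ω ∂μ) / (μ A).toReal| := by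
        rw [abs_div, abs_of_pos h0, le_div_iff₀ h0]
        linarith [hint]
      have h2 : (μ A).toReal * t ^ p ≤ (μ A).toReal * |(∫ ω in A, X ω ∂μ) / (μ A).toReal| ^ p :=
        mul_le_mul_of_nonneg_left (Real.rpow_le_rpow ht.le havg hp.le) h0.le
      rw [le_div_iff₀ htp]
      calc (μ A).toReal * t ^ p ≤ _ := h2
        _ ≤ C := h1
  set A1 : Set Ω := {ω | t ≤ Y ω} with hA1def
  set A2 : Set Ω := {ω | Y ω ≤ -t} with hA2def
  have hA1 : MeasurableSet A1 := measurableSet_le measurable_const hYmeas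
  have hA2 : MeasurableSet A2 := measurableSet_le hYmeas measurable_const
  have hXYA1 : ∫ ω in A1, X ω ∂μ = ∫ ω in A1, Y ω ∂μ :=
    integral_congr_ae (ae_restrict_of_ae hXY)
  have hXYA2 : ∫ ω in A2, X ω ∂μ = ∫ ω in A2, Y ω ∂μ :=
    integral_congr_ae (ae_restrict_of_ae hXY)
  have hb1 : (μ A1).toReal ≤ C / t ^ p := by
    apply key A1 hA1
    have := setIntegral_ge_of_const_le_real (c := t) hA1 (measure_ne_top μ A1)
      (fun ω hω => hω) hYint.integrableOn
    rw [hXYA1]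
    exact le_trans this (le_abs_self _)
  have hb2 : (μ A2).toReal ≤ C / t ^ p := by
    apply key A2 hA2
    have := setIntegral_ge_of_const_le_real (c := t) (f := fun ω => -Y ω) hA2 (measure_ne_top μ A2)
      (fun ω hω => by have h2 : Y ω ≤ -t := hω; show t ≤ -Y ω; linarith) hYint.neg.integrableOn
    rw [integral_neg] at this
    rw [hXYA2]
    exact this.trans (neg_le_abs (∫ ω in A2, Y ω ∂μ))
  have hset : μ {ω | t ≤ |X ω|} = μ {ω | t ≤ |Y ω|} := by
    apply measure_congr
    filter_upwards [hXY] with ω h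
    show (t ≤ |X ω|) = (t ≤ |Y ω|)
    rw [h]
  have hsub : {ω | t ≤ |Y ω|} ⊆ A1 ∪ A2 := by
    intro ω hω
    rcases le_abs.mp (show t ≤ |Y ω| from hω) with h | h
    · exact Or.inl h
    · exact Or.inr (by simp only [hA2def, Set.mem_setOf_eq]; linarith)
  have hμle : μ {ω | t ≤ |Y ω|} ≤ μ A1 + μ A2 :=
    le_trans (measure_mono hsub) (measure_union_le _ _)
  have htoReal : (μ {ω | t ≤ |Y ω|}).toReal ≤ (μ A1).toReal + (μ A2).toReal := by
    have := ENNReal.toReal_mono (by finiteness) hμle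
    rwa [ENNReal.toReal_add (measure_ne_top μ A1) (measure_ne_top μ A2)] at this
  rw [hset]
  calc (μ {ω | t ≤ |Y ω|}).toReal ≤ (μ A1).toReal + (μ A2).toReal := htoReal
    _ ≤ C / t ^ p + C / t ^ p := add_le_add hb1 hb2
    _ = 2 * C / t ^ p := by ring
end

section
/- Let X be an ℝ^d-valued random variable with mean μ, and p > q ≥ 1. Suppose X is (C_p^{1/p}/δ^{1/p−1}, δ)-resilient in the Euclidean norm for all δ ≤ 1/2. Then for every unit vector v, E[|⟨v, X − μ⟩|^q] ≤ (2C_p)^{q/p} · p/(p−q). -/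
open MeasureTheory
open scoped RealInnerProductSpace


lemma tail_one_dim {Ω : Type*} [MeasurableSpace Ω] (μ : Measure Ω) [IsProbabilityMeasure μ]
    (Y : Ω → ℝ) (hYi : Integrable Y μ) (hY0 : ∫ ω, Y ω ∂μ = 0)
    (p Cp : ℝ) (hp : 1 < p) (hCp : 0 < Cp)
    (hres : ∀ A : Set Ω, MeasurableSet A → 0 < (μ A).toReal → (μ A).toReal ≤ 1/2 →
      |∫ ω in A, Y ω ∂μ| ≤ Cp ^ (1/p) * (μ A).toReal ^ (1 - 1/p) * (1 - (μ A).toReal))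
    (t : ℝ) (ht : 0 < t) (ht2 : 2 * Cp ≤ t ^ p)
    {A : Set Ω} (hA : MeasurableSet A) (hAY : ∀ ω ∈ A, t ≤ Y ω) :
    (μ A).toReal ≤ Cp / t ^ p := by
  have hp0 : (0:ℝ) < p := by linarith
  have htp : (0:ℝ) < t ^ p := Real.rpow_pos_of_pos ht p
  set a := (μ A).toReal with ha_def
  have ha0 : 0 ≤ a := ENNReal.toReal_nonneg
  have ha1 : a ≤ 1 := by
    simpa [ha_def] using ENNReal.toReal_mono ENNReal.one_ne_top (prob_le_one (μ := μ) (s := A))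
  -- integral lower bound on sets where Y ≥ t
  have hint : ∀ B : Set Ω, MeasurableSet B → (∀ ω ∈ B, t ≤ Y ω) →
      t * (μ B).toReal ≤ ∫ ω in B, Y ω ∂μ := by
    intro B hB hBY
    have h1 : ∫ ω in B, (t : ℝ) ∂μ ≤ ∫ ω in B, Y ω ∂μ :=
      setIntegral_mono_on (integrableOn_const (measure_ne_top μ B))
        hYi.integrableOn hB hBY
    simpa [mul_comm, Measure.real] using h1
  by_cases hhalf : a ≤ 1/2
  · rcases eq_or_lt_of_le ha0 with h0 | h0
    · rw [← h0]; positivity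
    · have hbound := hres A hA h0 hhalf
      have h1 : t * a ≤ Cp ^ (1/p) * a ^ (1 - 1/p) * (1 - a) := by
        refine le_trans ?_ hbound
        refine le_trans (hint A hA hAY) (le_abs_self _)
      have h2 : t * a ≤ Cp ^ (1/p) * a ^ (1 - 1/p) := by
        have : Cp ^ (1/p) * a ^ (1 - 1/p) * (1 - a) ≤ Cp ^ (1/p) * a ^ (1 - 1/p) * 1 := by
          apply mul_le_mul_of_nonneg_left (by linarith) (by positivity)
        linarith
      have h3 : t ≤ Cp ^ (1/p) * a ^ (-(1/p)) := by
        have haa : a ^ (1 - 1/p) = a * a ^ (-(1/p)) := by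
          rw [show (1 : ℝ) - 1/p = 1 + -(1/p) by ring, Real.rpow_add h0, Real.rpow_one]
        rw [haa] at h2
        have h2' : t * a ≤ (Cp ^ (1/p) * a ^ (-(1/p))) * a := by linarith [h2]; 
        exact le_of_mul_le_mul_right h2' h0
      have h4 : t ^ p ≤ Cp * a⁻¹ := by
        have := Real.rpow_le_rpow ht.le h3 hp0.le
        rwa [Real.mul_rpow (by positivity) (by positivity),
          ← Real.rpow_mul hCp.le, ← Real.rpow_mul ha0,
          one_div, inv_mul_cancel₀ hp0.ne', Real.rpow_one,
          neg_mul, inv_mul_cancel₀ hp0.ne', Real.rpow_neg_one] at this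
      rw [le_div_iff₀ htp]
      calc a * t ^ p ≤ a * (Cp * a⁻¹) := mul_le_mul_of_nonneg_left h4 ha0
      _ = Cp := by field_simp
  · exfalso
    push_neg at hhalf
    set b := (μ Aᶜ).toReal with hb_def
    have hab : a + b = 1 := by
      rw [ha_def, hb_def, ← ENNReal.toReal_add (measure_ne_top μ A) (measure_ne_top μ Aᶜ),
        measure_add_measure_compl hA, measure_univ, ENNReal.toReal_one]
    have hIAc : ∫ ω in Aᶜ, Y ω ∂μ = - ∫ ω in A, Y ω ∂μ := by
      have := integral_add_compl hA hYi
      rw [hY0] at this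
      linarith
    have hItA : t * a ≤ ∫ ω in A, Y ω ∂μ := hint A hA hAY
    rcases eq_or_lt_of_le (ENNReal.toReal_nonneg : (0:ℝ) ≤ b) with hb0 | hb0
    · have : μ Aᶜ = 0 := by
        rcases (ENNReal.toReal_eq_zero_iff _).1 hb0.symm with h' | h'
        · exact h'
        · exact absurd h' (measure_ne_top μ _)
      have : ∫ ω in Aᶜ, Y ω ∂μ = 0 := by
        rw [Measure.restrict_eq_zero.2 this, integral_zero_measure]
      nlinarith
    · have hbhalf : b ≤ 1/2 := by linarith
      have hbound := hres Aᶜ hA.compl hb0 hbhalf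
      have h1b : 1 - b = a := by linarith
      have habs : t * a ≤ |∫ ω in Aᶜ, Y ω ∂μ| := by
        rw [hIAc, abs_neg]
        exact le_trans hItA (le_abs_self _)
      rw [h1b] at hbound
      have ha0' : (0:ℝ) < a := by linarith
      have h5 : t ≤ Cp ^ (1/p) * b ^ (1 - 1/p) :=
        le_of_mul_le_mul_right (by calc t * a ≤ |∫ ω in Aᶜ, Y ω ∂μ| := habs
          _ ≤ Cp ^ (1/p) * b ^ (1 - 1/p) * a := hbound) ha0'
      have h6 : b ^ (1 - 1/p) ≤ 1 :=
        Real.rpow_le_one hb0.le (by linarith) (by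
          have : 1/p < 1 := by rw [div_lt_one hp0]; linarith
          linarith)
      have h7 : t ≤ Cp ^ (1/p) := by
        calc t ≤ Cp ^ (1/p) * b ^ (1 - 1/p) := h5
        _ ≤ Cp ^ (1/p) * 1 := by apply mul_le_mul_of_nonneg_left h6 (by positivity)
        _ = Cp ^ (1/p) := mul_one _
      have h8 : t ^ p ≤ Cp := by
        have := Real.rpow_le_rpow ht.le h7 hp0.le
        rwa [← Real.rpow_mul hCp.le, one_div, inv_mul_cancel₀ hp0.ne', Real.rpow_one] at this
      linarith

theorem stmt5 {Ω : Type*} [MeasurableSpace Ω] (μ : Measure Ω) [IsProbabilityMeasure μ]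
    {d : ℕ} (X : Ω → EuclideanSpace ℝ (Fin d)) (hX : Integrable X μ)
    (m : EuclideanSpace ℝ (Fin d)) (hm : ∫ ω, X ω ∂μ = m)
    (p q Cp : ℝ) (hq : 1 ≤ q) (hpq : q < p) (hCp : 0 < Cp)
    (hres : ∀ δ : ℝ, 0 < δ → δ ≤ 1 / 2 →
      ∀ A : Set Ω, MeasurableSet A → 0 < (μ A).toReal → (μ A).toReal ≤ δ →
        ‖(μ A).toReal⁻¹ • (∫ ω in A, X ω ∂μ) - m‖ ≤
          (Cp ^ (1 / p) / δ ^ (1 / p - 1)) * ((1 - (μ A).toReal) / (μ A).toReal)) :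
    ∀ v : EuclideanSpace ℝ (Fin d), ‖v‖ = 1 →
      ∫ ω, |⟪v, X ω - m⟫| ^ q ∂μ ≤ (2 * Cp) ^ (q / p) * (p / (p - q)) := by
  intro v hv
  have hp1 : 1 < p := lt_of_le_of_lt hq hpq
  have hp0 : (0:ℝ) < p := by linarith
  have hq0 : (0:ℝ) < q := by linarith
  have h2Cp : (0:ℝ) < 2 * Cp := by linarith
  set X' : Ω → EuclideanSpace ℝ (Fin d) := hX.1.mk X with hX'def
  have hX'meas : Measurable X' := hX.1.stronglyMeasurable_mk.measurable
  have hXX' : X =ᵐ[μ] X' := hX.1.ae_eq_mk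
  set Y : Ω → ℝ := fun ω => ⟪v, X' ω⟫ - ⟪v, m⟫ with hYdef
  have hYmeas : Measurable Y := (measurable_const.inner hX'meas).sub measurable_const
  have hYint1 : Integrable (fun ω => ⟪v, X' ω⟫) μ :=
    (hX.const_inner v).congr (hXX'.mono fun ω h => by simp only [h])
  have hYint : Integrable Y μ := hYint1.sub (integrable_const _)
  have hY0 : ∫ ω, Y ω ∂μ = 0 := by
    rw [hYdef]
    rw [integral_sub hYint1 (integrable_const _), integral_const, probReal_univ,
      one_smul]
    have : ∫ ω, ⟪v, X' ω⟫ ∂μ = ∫ ω, ⟪v, X ω⟫ ∂μ :=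
      integral_congr_ae (hXX'.mono fun ω h => by simp only [h])
    rw [this, integral_inner hX, hm, sub_self]
  -- the one-dimensional resilience bound
  have hres1 : ∀ A : Set Ω, MeasurableSet A → 0 < (μ A).toReal → (μ A).toReal ≤ 1/2 →
      |∫ ω in A, Y ω ∂μ| ≤ Cp ^ (1/p) * (μ A).toReal ^ (1 - 1/p) * (1 - (μ A).toReal) := by
    intro A hA ha0 ha2
    set a := (μ A).toReal with ha_def
    have hbase := hres a ha0 ha2 A hA ha0 le_rfl
    have hIA : ∫ ω in A, Y ω ∂μ = ⟪v, ∫ ω in A, X ω ∂μ⟫ - a * ⟪v, m⟫ := by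
      rw [hYdef]
      rw [integral_sub hYint1.integrableOn (integrableOn_const (measure_ne_top μ A))]
      have h1 : ∫ ω in A, ⟪v, X' ω⟫ ∂μ = ∫ ω in A, ⟪v, X ω⟫ ∂μ :=
        integral_congr_ae ((ae_restrict_of_ae hXX').mono fun ω h => by simp only [h])
      rw [h1, integral_inner hX.integrableOn, setIntegral_const, smul_eq_mul]
      rfl
    have hinner : ⟪v, a⁻¹ • (∫ ω in A, X ω ∂μ) - m⟫ = a⁻¹ * ∫ ω in A, Y ω ∂μ := by
      rw [hIA, inner_sub_right, real_inner_smul_right]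
      field_simp
    have hCS : a⁻¹ * |∫ ω in A, Y ω ∂μ| ≤ (Cp ^ (1/p) / a ^ (1/p - 1)) * ((1 - a) / a) := by
      calc a⁻¹ * |∫ ω in A, Y ω ∂μ| = |⟪v, a⁻¹ • (∫ ω in A, X ω ∂μ) - m⟫| := by
            rw [hinner, abs_mul, abs_of_pos (inv_pos.2 ha0)]
      _ ≤ ‖v‖ * ‖a⁻¹ • (∫ ω in A, X ω ∂μ) - m‖ := abs_real_inner_le_norm _ _
      _ = ‖a⁻¹ • (∫ ω in A, X ω ∂μ) - m‖ := by rw [hv, one_mul]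
      _ ≤ _ := hbase
    have hrpow : Cp ^ (1/p) / a ^ (1/p - 1) = Cp ^ (1/p) * a ^ (1 - 1/p) := by
      rw [div_eq_mul_inv, ← Real.rpow_neg ha0.le, show -(1/p - 1) = 1 - 1/p by ring]
    rw [hrpow] at hCS
    have := mul_le_mul_of_nonneg_left hCS ha0.le
    calc |∫ ω in A, Y ω ∂μ| = a * (a⁻¹ * |∫ ω in A, Y ω ∂μ|) := by field_simp
    _ ≤ a * (Cp ^ (1/p) * a ^ (1 - 1/p) * ((1 - a) / a)) := this
    _ = Cp ^ (1/p) * a ^ (1 - 1/p) * (1 - a) := by field_simp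
  -- layer cake
  have layercake : ∫⁻ ω, ENNReal.ofReal (|Y ω| ^ q) ∂μ =
      ∫⁻ t in Set.Ioi 0, μ {ω | t ≤ |Y ω|} * ENNReal.ofReal (q * t ^ (q - 1)) := by
    have h := lintegral_comp_eq_lintegral_meas_le_mul μ (f := fun ω => |Y ω|)
      (g := fun t => q * t ^ (q - 1))
      (Filter.Eventually.of_forall fun ω => abs_nonneg _) hYmeas.abs.aemeasurable
      (fun t ht => (intervalIntegral.intervalIntegrable_rpow' (by linarith)).const_mul q)
      ((ae_restrict_iff' measurableSet_Ioi).2 (Filter.Eventually.of_forall fun t ht => by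
        have : (0:ℝ) < t := ht
        positivity))
    rw [← h]
    apply lintegral_congr fun ω => ?_
    congr 1
    rw [intervalIntegral.integral_const_mul, integral_rpow (Or.inl (by linarith)),
      sub_add_cancel, Real.zero_rpow hq0.ne', sub_zero]
    field_simp
  -- threshold T
  set T : ℝ := (2 * Cp) ^ (1/p) with hTdef
  have hT0 : 0 < T := Real.rpow_pos_of_pos h2Cp _
  have hTp : T ^ p = 2 * Cp := by
    rw [hTdef, ← Real.rpow_mul h2Cp.le, one_div, inv_mul_cancel₀ hp0.ne', Real.rpow_one]
  -- tail bound in ENNReal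
  have tailE : ∀ t : ℝ, t ∈ Set.Ioi T → μ {ω | t ≤ |Y ω|} ≤ ENNReal.ofReal (2 * Cp / t ^ p) := by
    intro t ht
    have ht0 : 0 < t := hT0.trans ht
    have ht2 : 2 * Cp ≤ t ^ p := by
      rw [← hTp]; exact Real.rpow_le_rpow hT0.le (le_of_lt ht) hp0.le
    have htail1 : (μ {ω | t ≤ Y ω}).toReal ≤ Cp / t ^ p :=
      tail_one_dim μ Y hYint hY0 p Cp hp1 hCp hres1 t ht0 ht2
        (hYmeas measurableSet_Ici) (fun ω hω => hω)
    have htail2 : (μ {ω | t ≤ -Y ω}).toReal ≤ Cp / t ^ p :=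
      tail_one_dim μ (fun ω => -Y ω) hYint.neg (by rw [integral_neg, hY0, neg_zero]) p Cp hp1 hCp
        (fun A hA h1 h2 => by
          rw [integral_neg, abs_neg]; exact hres1 A hA h1 h2) t ht0 ht2
        (hYmeas.neg measurableSet_Ici) (fun ω hω => hω)
    have hsub : {ω | t ≤ |Y ω|} ⊆ {ω | t ≤ Y ω} ∪ {ω | t ≤ -Y ω} := by
      intro ω hω
      have hω' : t ≤ |Y ω| := hω
      rcases le_abs.1 hω' with h | h
      · exact Or.inl h
      · exact Or.inr h
    calc μ {ω | t ≤ |Y ω|} ≤ μ ({ω | t ≤ Y ω} ∪ {ω | t ≤ -Y ω}) := measure_mono hsub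
    _ ≤ μ {ω | t ≤ Y ω} + μ {ω | t ≤ -Y ω} := measure_union_le _ _
    _ ≤ ENNReal.ofReal (Cp / t ^ p) + ENNReal.ofReal (Cp / t ^ p) := by
        refine add_le_add ?_ ?_
        · rw [← ENNReal.ofReal_toReal (measure_ne_top μ _)]
          exact ENNReal.ofReal_le_ofReal htail1
        · rw [← ENNReal.ofReal_toReal (measure_ne_top μ _)]
          exact ENNReal.ofReal_le_ofReal htail2
    _ = ENNReal.ofReal (2 * Cp / t ^ p) := by
        rw [← ENNReal.ofReal_add (by positivity) (by positivity)]
        congr 1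
        ring
  -- key lintegral bound
  have key : ∫⁻ ω, ENNReal.ofReal (|Y ω| ^ q) ∂μ ≤
      ENNReal.ofReal ((2 * Cp) ^ (q/p) * (p / (p - q))) := by
    rw [layercake]
    have hsplit : Set.Ioi (0:ℝ) = Set.Ioc 0 T ∪ Set.Ioi T := (Set.Ioc_union_Ioi_eq_Ioi hT0.le).symm
    rw [hsplit, lintegral_union measurableSet_Ioi (Set.Ioc_disjoint_Ioi le_rfl)]
    have hgint : IntervalIntegrable (fun t : ℝ => q * t ^ (q-1)) volume 0 T :=
      (intervalIntegral.intervalIntegrable_rpow' (by linarith)).const_mul q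
    have hI1 : ∫⁻ t in Set.Ioc 0 T, μ {ω | t ≤ |Y ω|} * ENNReal.ofReal (q * t ^ (q - 1)) ≤
        ENNReal.ofReal (T ^ q) := by
      calc ∫⁻ t in Set.Ioc 0 T, μ {ω | t ≤ |Y ω|} * ENNReal.ofReal (q * t ^ (q - 1))
          ≤ ∫⁻ t in Set.Ioc 0 T, ENNReal.ofReal (q * t ^ (q - 1)) := by
            refine lintegral_mono fun t => ?_
            calc μ {ω | t ≤ |Y ω|} * ENNReal.ofReal (q * t ^ (q - 1))
                ≤ 1 * ENNReal.ofReal (q * t ^ (q - 1)) := mul_le_mul_left prob_le_one _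
            _ = _ := one_mul _
      _ = ENNReal.ofReal (∫ t in Set.Ioc 0 T, q * t ^ (q - 1)) := by
            refine (ofReal_integral_eq_lintegral_ofReal ?_ ?_).symm
            · exact (intervalIntegrable_iff_integrableOn_Ioc_of_le hT0.le).1 hgint
            · refine (ae_restrict_iff' measurableSet_Ioc).2
                (Filter.Eventually.of_forall fun t ht => ?_)
              have : (0:ℝ) < t := ht.1
              positivity
      _ = ENNReal.ofReal (T ^ q) := by
            congr 1
            rw [← intervalIntegral.integral_of_le hT0.le,
              intervalIntegral.integral_const_mul, integral_rpow (Or.inl (by linarith)),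
              sub_add_cancel, Real.zero_rpow hq0.ne', sub_zero]
            field_simp
    have hI2 : ∫⁻ t in Set.Ioi T, μ {ω | t ≤ |Y ω|} * ENNReal.ofReal (q * t ^ (q - 1)) ≤
        ENNReal.ofReal ((2 * Cp) ^ (q/p) * (q / (p - q))) := by
      calc ∫⁻ t in Set.Ioi T, μ {ω | t ≤ |Y ω|} * ENNReal.ofReal (q * t ^ (q - 1))
          ≤ ∫⁻ t in Set.Ioi T, ENNReal.ofReal (2 * Cp * q * t ^ (q - 1 - p)) := by
            refine lintegral_mono_ae ((ae_restrict_iff' measurableSet_Ioi).2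
              (Filter.Eventually.of_forall fun t ht => ?_))
            have ht0 : 0 < t := hT0.trans ht
            calc μ {ω | t ≤ |Y ω|} * ENNReal.ofReal (q * t ^ (q - 1))
                ≤ ENNReal.ofReal (2 * Cp / t ^ p) * ENNReal.ofReal (q * t ^ (q - 1)) :=
                  mul_le_mul_left (tailE t ht) _
            _ = ENNReal.ofReal (2 * Cp / t ^ p * (q * t ^ (q - 1))) :=
                  (ENNReal.ofReal_mul (by positivity)).symm
            _ = ENNReal.ofReal (2 * Cp * q * t ^ (q - 1 - p)) := by
                  congr 1
                  have hsub : t ^ (q - 1 - p) = t ^ (q - 1) / t ^ p :=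
                    Real.rpow_sub ht0 (q - 1) p
                  have hbp : t ^ p ≠ 0 := (Real.rpow_pos_of_pos ht0 p).ne'
                  rw [hsub]
                  field_simp
      _ = ENNReal.ofReal (∫ t in Set.Ioi T, 2 * Cp * q * t ^ (q - 1 - p)) := by
            refine (ofReal_integral_eq_lintegral_ofReal ?_ ?_).symm
            · exact (integrableOn_Ioi_rpow_of_lt (by linarith) hT0).const_mul _
            · refine (ae_restrict_iff' measurableSet_Ioi).2
                (Filter.Eventually.of_forall fun t ht => ?_)
              have ht0 : (0:ℝ) < t := hT0.trans ht
              positivity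
      _ = ENNReal.ofReal ((2 * Cp) ^ (q/p) * (q / (p - q))) := by
            congr 1
            rw [integral_const_mul, integral_Ioi_rpow_of_lt (by linarith) hT0]
            have hqp : q - 1 - p + 1 = q - p := by ring
            rw [hqp]
            have hTqp : 2 * Cp * T ^ (q - p) = (2 * Cp) ^ (q/p) := by
              rw [hTdef, ← Real.rpow_mul h2Cp.le]
              rw [show 2 * Cp * (2*Cp) ^ (1/p * (q - p)) = (2*Cp) ^ (1:ℝ) * (2*Cp) ^ (1/p * (q-p)) by
                rw [Real.rpow_one]]
              rw [← Real.rpow_add h2Cp]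
              congr 1
              field_simp
              ring
            have hpq' : p - q ≠ 0 := by linarith
            calc 2 * Cp * q * (-T ^ (q - p) / (q - p))
                = (2 * Cp * T ^ (q - p)) * (q / (p - q)) := by
                  have hqp2 : q - p ≠ 0 := by linarith
                  field_simp
                  ring
            _ = (2 * Cp) ^ (q/p) * (q / (p - q)) := by rw [hTqp]
    have hTq : T ^ q = (2 * Cp) ^ (q/p) := by
      rw [hTdef, ← Real.rpow_mul h2Cp.le]
      congr 1
      field_simp
    calc _ ≤ ENNReal.ofReal (T ^ q) + ENNReal.ofReal ((2 * Cp) ^ (q/p) * (q / (p - q))) :=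
          add_le_add hI1 hI2
    _ = ENNReal.ofReal ((2 * Cp) ^ (q/p) * (p / (p - q))) := by
        rw [← ENNReal.ofReal_add (by positivity) (by
          have h1 : (0:ℝ) ≤ (2 * Cp) ^ (q/p) := by positivity
          have h2 : (0:ℝ) ≤ q / (p - q) := by
            apply div_nonneg hq0.le; linarith
          positivity)]
        congr 1
        rw [hTq]
        have hpq' : p - q ≠ 0 := by linarith
        field_simp
        ring
  -- conclude
  have hfinal : ∫ ω, |Y ω| ^ q ∂μ ≤ (2 * Cp) ^ (q/p) * (p / (p - q)) := by
    rw [integral_eq_lintegral_of_nonneg_ae (Filter.Eventually.of_forall fun ω => by show (0:ℝ) ≤ |Y ω| ^ q; positivity)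
      ((show Measurable fun ω => |Y ω| ^ q from
        (Real.continuous_rpow_const hq0.le).measurable.comp hYmeas.abs).aestronglyMeasurable)]
    have h := ENNReal.toReal_mono ENNReal.ofReal_ne_top key
    rwa [ENNReal.toReal_ofReal (by
      have h1 : (0:ℝ) ≤ (2 * Cp) ^ (q/p) := by positivity
      have h2 : (0:ℝ) ≤ p / (p - q) := by apply div_nonneg hp0.le; linarith
      positivity)] at h
  calc ∫ ω, |⟪v, X ω - m⟫| ^ q ∂μ = ∫ ω, |Y ω| ^ q ∂μ := by
        refine integral_congr_ae (hXX'.mono fun ω h => ?_)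
        simp only [hYdef, inner_sub_right, h]
  _ ≤ _ := hfinal
end

section
/- Let G be a symmetric doubly stochastic n×n matrix, Π the spectral projection onto eigenvalues of G at least 1/2, and let B = √n · A where AAᵀ = Π (so the rows b_1,…,b_n of B are the isotropic spectral embedding). Then for every nonempty subset T of [n], ‖(1/|T|) Σ_{i∈T} b_i‖² ≥ (n/|T|) · (1/2 − Φ_G(T)), where Φ_G(T) = 1 − ⟨1_T, G 1_T⟩/|T|. -/
open Matrix

private lemma dot_sum' {m k : ℕ} (x : Fin m → ℝ) (f : Fin k → Fin m → ℝ) :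
    x ⬝ᵥ (∑ i, f i) = ∑ i, x ⬝ᵥ f i := by
  simp only [dotProduct, Finset.sum_apply, Finset.mul_sum]
  exact Finset.sum_comm

private lemma sum_mulVec' {m k : ℕ} (M : Fin k → Matrix (Fin m) (Fin m) ℝ)
    (x : Fin m → ℝ) : (∑ i, M i) *ᵥ x = ∑ i, (M i) *ᵥ x := by
  funext j
  simp only [Matrix.mulVec, dotProduct, Finset.sum_apply, Matrix.sum_apply,
    Finset.sum_mul]
  exact Finset.sum_comm

theorem stmt8 {n d : ℕ} (G : Matrix (Fin n) (Fin n) ℝ) (hGsymm : G.IsSymm)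
    (v : Fin n → Fin n → ℝ)
    (hortho : ∀ i j, v i ⬝ᵥ v j = if i = j then (1 : ℝ) else 0)
    (lam : Fin n → ℝ) (hlam : ∀ i, |lam i| ≤ 1)
    (heig : ∀ i, G.mulVec (v i) = lam i • v i)
    (P : Matrix (Fin n) (Fin n) ℝ)
    (hP : P = ∑ i, if (1 : ℝ) / 2 ≤ lam i then vecMulVec (v i) (v i) else 0)
    (A : Matrix (Fin n) (Fin d) ℝ) (hA : A * Aᵀ = P)
    (b : Fin n → Fin d → ℝ) (hb : ∀ i, b i = Real.sqrt n • A i)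
    (T : Finset (Fin n)) (hT : T.Nonempty) :
    ((n : ℝ) / T.card) *
        (1 / 2 - (1 - ((fun i => if i ∈ T then (1 : ℝ) else 0) ⬝ᵥ
          G.mulVec (fun i => if i ∈ T then (1 : ℝ) else 0)) / T.card)) ≤
      ((T.card : ℝ)⁻¹ • ∑ i ∈ T, b i) ⬝ᵥ ((T.card : ℝ)⁻¹ • ∑ i ∈ T, b i) := by
  set χ : Fin n → ℝ := fun i => if i ∈ T then (1 : ℝ) else 0 with hχdef
  set c : Fin n → ℝ := fun i => χ ⬝ᵥ v i with hcdef
  -- χ expands in the orthonormal basis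
  have hχexp : χ = ∑ i, c i • v i := by
    set V : Matrix (Fin n) (Fin n) ℝ := Matrix.of v with hV
    have hVVt : V * Vᵀ = 1 := by
      ext i j
      simp [Matrix.mul_apply, Matrix.one_apply, ← hortho i j, dotProduct, hV]
    have hVtV : Vᵀ * V = 1 := mul_eq_one_comm.mp hVVt
    have h1 : Vᵀ.mulVec (V.mulVec χ) = χ := by
      rw [Matrix.mulVec_mulVec, hVtV, Matrix.one_mulVec]
    funext j
    have h2 := congrFun h1 j
    rw [← h2]
    simp only [Matrix.mulVec, Matrix.transpose_apply, hV, Matrix.of_apply,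
      Finset.sum_apply, Pi.smul_apply, smul_eq_mul]
    refine Finset.sum_congr rfl fun i _ => ?_
    have h3 : (Matrix.of v *ᵥ χ) i = v i ⬝ᵥ χ := rfl
    show v i j * (Matrix.of v *ᵥ χ) i = (χ ⬝ᵥ v i) * v i j
    rw [h3, dotProduct_comm]
    ring
  have hχv : ∀ i, χ ⬝ᵥ v i = c i := fun i => rfl
  -- value of χᵀGχ
  have hGχ : G.mulVec χ = ∑ i, (c i * lam i) • v i := by
    rw [hχexp]
    rw [show G.mulVec (∑ i, c i • v i) = G.mulVecLin (∑ i, c i • v i) from rfl]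
    rw [map_sum]
    refine Finset.sum_congr rfl fun i _ => ?_
    rw [LinearMap.map_smul, Matrix.mulVecLin_apply, heig i, smul_smul]
  have hg : χ ⬝ᵥ G.mulVec χ = ∑ i, lam i * c i ^ 2 := by
    rw [hGχ, dot_sum']
    refine Finset.sum_congr rfl fun i _ => ?_
    rw [dotProduct_smul, hχv i, smul_eq_mul]
    ring
  -- value of χᵀχ
  have hScard : χ ⬝ᵥ χ = (T.card : ℝ) := by
    simp [dotProduct, hχdef, ite_and]
  have hSsum : χ ⬝ᵥ χ = ∑ i, c i ^ 2 := by
    conv_lhs => rw [hχexp]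
    rw [dot_sum']
    refine Finset.sum_congr rfl fun i _ => ?_
    rw [dotProduct_smul, ← hχexp, hχv i, smul_eq_mul, sq]
  -- value of χᵀPχ
  have hp : χ ⬝ᵥ P.mulVec χ = ∑ i, if (1:ℝ)/2 ≤ lam i then c i ^ 2 else 0 := by
    rw [hP, sum_mulVec', dot_sum']
    refine Finset.sum_congr rfl fun i _ => ?_
    by_cases h : (1:ℝ)/2 ≤ lam i
    · simp only [if_pos h]
      have hv : (vecMulVec (v i) (v i)).mulVec χ = (v i ⬝ᵥ χ) • v i := by
        funext j
        simp only [Matrix.mulVec, vecMulVec_apply, dotProduct, Pi.smul_apply,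
          smul_eq_mul, Finset.mul_sum]
        rw [Finset.sum_mul]
        exact Finset.sum_congr rfl fun x _ => by ring
      rw [hv, dotProduct_smul, hχv i, smul_eq_mul, dotProduct_comm (v i) χ, hχv i, sq]
    · rw [if_neg h, if_neg h, Matrix.zero_mulVec, dotProduct_zero]
  -- key spectral inequality
  have key : (∑ i, lam i * c i ^ 2) - (χ ⬝ᵥ χ) / 2 ≤ χ ⬝ᵥ P.mulVec χ := by
    rw [hp, hSsum, sub_le_iff_le_add, Finset.sum_div, ← Finset.sum_add_distrib]
    apply Finset.sum_le_sum
    intro i _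
    have h1 := abs_le.mp (hlam i)
    have h2 : (0:ℝ) ≤ c i ^ 2 := sq_nonneg _
    by_cases h : (1:ℝ)/2 ≤ lam i
    · rw [if_pos h]; nlinarith
    · rw [if_neg h]; push_neg at h; nlinarith
  -- compute the RHS
  have hbsum : ∑ i ∈ T, b i = Real.sqrt n • ∑ i ∈ T, A i := by
    exact (Finset.sum_congr rfl fun i _ => hb i).trans Finset.smul_sum.symm
  have hu : ∑ i ∈ T, (A i : Fin d → ℝ) = Aᵀ.mulVec χ := by
    funext k
    simp only [Matrix.mulVec, dotProduct, Matrix.transpose_apply, hχdef,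
      mul_ite, mul_one, mul_zero, Finset.sum_apply]
    rw [Finset.sum_ite_mem, Finset.univ_inter]
    exact Finset.sum_apply k T (fun i => A i)
  have he : Aᵀ.mulVec χ = χ ᵥ* A := Matrix.mulVec_transpose A χ
  have hdd : (∑ i ∈ T, (A i : Fin d → ℝ)) ⬝ᵥ (∑ i ∈ T, (A i : Fin d → ℝ))
      = χ ⬝ᵥ P.mulVec χ := by
    rw [hu, he, ← Matrix.dotProduct_mulVec, ← he, Matrix.mulVec_mulVec, hA]
  -- final arithmetic
  have hS0 : (0:ℝ) < (T.card : ℝ) := by exact_mod_cast Finset.card_pos.mpr hT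
  have hn : Real.sqrt n * Real.sqrt n = (n : ℝ) :=
    Real.mul_self_sqrt (Nat.cast_nonneg n)
  have hrhs : ((T.card:ℝ)⁻¹ • ∑ i ∈ T, b i) ⬝ᵥ ((T.card:ℝ)⁻¹ • ∑ i ∈ T, b i)
      = (n : ℝ) * (χ ⬝ᵥ P.mulVec χ) * ((T.card:ℝ)⁻¹ * (T.card:ℝ)⁻¹) := by
    rw [hbsum, smul_smul, smul_dotProduct, dotProduct_smul, hdd, smul_eq_mul,
      smul_eq_mul]
    rw [show ((T.card:ℝ)⁻¹ * Real.sqrt n) * (((T.card:ℝ)⁻¹ * Real.sqrt n) * (χ ⬝ᵥ P.mulVec χ))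
        = (Real.sqrt n * Real.sqrt n) * (χ ⬝ᵥ P.mulVec χ) * ((T.card:ℝ)⁻¹ * (T.card:ℝ)⁻¹) from by ring,
      hn]
  rw [hrhs]
  have key' : (χ ⬝ᵥ G.mulVec χ) - (T.card : ℝ)/2 ≤ χ ⬝ᵥ P.mulVec χ := by
    rw [hg]
    calc (∑ i, lam i * c i ^ 2) - (T.card : ℝ)/2
        = (∑ i, lam i * c i ^ 2) - (χ ⬝ᵥ χ)/2 := by rw [hScard]
      _ ≤ _ := key
  have e1 : ((n:ℝ) / T.card) * (1/2 - (1 - (χ ⬝ᵥ G.mulVec χ)/T.card))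
      = (n:ℝ) * ((χ ⬝ᵥ G.mulVec χ) - (T.card:ℝ)/2) * ((T.card:ℝ)⁻¹ * (T.card:ℝ)⁻¹) := by
    linear_combination ((n:ℝ) * (T.card:ℝ)⁻¹ / 2) * mul_inv_cancel₀ hS0.ne'
  rw [e1]
  have h2 : (n:ℝ) * ((χ ⬝ᵥ G.mulVec χ) - (T.card:ℝ)/2) ≤ (n:ℝ) * (χ ⬝ᵥ P.mulVec χ) :=
    mul_le_mul_of_nonneg_left key' (Nat.cast_nonneg n)
  exact mul_le_mul_of_nonneg_right h2 (mul_nonneg (inv_nonneg.mpr hS0.le) (inv_nonneg.mpr hS0.le))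
end
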